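/- Let A be a finite subset of a commutative group, K = |A+A|/|A|, and X ⊆ A nonempty minimizing |X+A|/|X| over nonempty subsets of A. For all positive integers λ₁, λ₂: |A + (λ₁+λ₂)·A| ≤ K·|X+λ₁·A|·|X+λ₂·A|/|X| ≤ K^{λ₁+λ₂+1}·|A|. -/

import Mathlib

open Finset Pointwise

theorem dilate_sum_add {G : Type*} [AddCommGroup G] [DecidableEq G]
    (A X : Finset G) (hA : A.Nonempty) (hXA : X ⊆ A) (hX : X.Nonempty)
    (K : ℝ) (hK : K = ((A + A).card : ℝ) / A.card)
    (hmin : ∀ Y ⊆ A, Y.Nonempty →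
      ((X + A).card : ℝ) / X.card ≤ ((Y + A).card : ℝ) / Y.card)
    (l₁ l₂ : ℕ) (hl₁ : 1 ≤ l₁) (hl₂ : 1 ≤ l₂) :
    ((A + A.image (fun a => (l₁ + l₂) • a)).card : ℝ)
        ≤ K * ((X + A.image (fun a => l₁ • a)).card : ℝ)
            * ((X + A.image (fun a => l₂ • a)).card : ℝ) / X.card
      ∧ K * ((X + A.image (fun a => l₁ • a)).card : ℝ)
            * ((X + A.image (fun a => l₂ • a)).card : ℝ) / X.card
        ≤ K ^ (l₁ + l₂ + 1) * A.card := by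
  have hX0 : (0:ℝ) < X.card := by exact_mod_cast hX.card_pos
  have hA0 : (0:ℝ) < A.card := by exact_mod_cast hA.card_pos
  -- Petridis hypothesis from minimality
  have hPP : ∀ X' ⊆ X, (X + A).card * X'.card ≤ (X' + A).card * X.card := by
    intro X' hX'
    obtain rfl | hX'ne := X'.eq_empty_or_nonempty
    · simp
    have h := hmin X' (hX'.trans hXA) hX'ne
    have hX'0 : (0:ℝ) < X'.card := by exact_mod_cast hX'ne.card_pos
    rw [div_le_div_iff₀ hX0 hX'0] at h
    exact_mod_cast h
  have hpet : ∀ C : Finset G,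
      ((X + A + C).card : ℝ) * X.card ≤ ((X + A).card : ℝ) * (X + C).card := by
    intro C
    have h := Finset.pluennecke_petridis_inequality_add C hPP
    rw [show C + X + A = X + A + C by abel, add_comm C X] at h
    exact_mod_cast h
  have hXAK : ((X + A).card : ℝ) ≤ K * X.card := by
    have h := hmin A Subset.rfl hA
    rw [div_le_div_iff₀ hX0 hA0] at h
    rw [hK, div_mul_eq_mul_div, le_div_iff₀ hA0]
    linarith
  have hKpos : (0:ℝ) < K := by
    have h1 : (0:ℝ) < (A + A).card := by
      exact_mod_cast (hA.add hA).card_pos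
    rw [hK]; positivity
  -- growth lemma
  have hS : ∀ l : ℕ, ((X + A.image (fun a => l • a)).card : ℝ) ≤ K ^ l * X.card := by
    intro l
    induction l with
    | zero =>
      have h0 : X + A.image (fun a => (0:ℕ) • a) = X := by
        have himg : A.image (fun a => (0:ℕ) • a) = {0} := by
          rw [show (fun a : G => (0:ℕ) • a) = fun _ => (0:G) from funext fun a => zero_smul ℕ a]
          exact Finset.image_const hA 0
        rw [himg, add_singleton]
        simp
      rw [h0]
      simp
    | succ l ih =>
      have hsub : X + A.image (fun a => (l+1) • a) ⊆ X + A + A.image (fun a => l • a) := by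
        rw [add_assoc]
        refine add_subset_add_left ?_
        intro y hy
        obtain ⟨a, ha, rfl⟩ := Finset.mem_image.1 hy
        have : (l + 1) • a = a + l • a := by
          rw [add_smul, one_smul, add_comm]
        rw [this]
        exact add_mem_add ha (Finset.mem_image_of_mem _ ha)
      have h1 : ((X + A.image (fun a => (l+1) • a)).card : ℝ)
          ≤ ((X + A + A.image (fun a => l • a)).card : ℝ) := by
        exact_mod_cast Finset.card_le_card hsub
      have key : ((X + A + A.image (fun a => l • a)).card : ℝ) ≤ K ^ (l+1) * X.card := by
        rw [← mul_le_mul_iff_left₀ hX0]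
        calc ((X + A + A.image (fun a => l • a)).card : ℝ) * X.card
            ≤ ((X + A).card : ℝ) * (X + A.image (fun a => l • a)).card := hpet _
          _ ≤ (K * X.card) * (K ^ l * X.card) := by
              refine mul_le_mul hXAK ih (by positivity) (by positivity)
          _ = K ^ (l+1) * X.card * X.card := by rw [pow_succ]; ring
      exact h1.trans key
  set D₁ := A.image (fun a => l₁ • a) with hD₁
  set D₂ := A.image (fun a => l₂ • a) with hD₂
  have hsub2 : A + A.image (fun a => (l₁ + l₂) • a) ⊆ A + D₁ + D₂ := by
    rw [add_assoc]
    refine add_subset_add_left ?_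
    intro y hy
    obtain ⟨a, ha, rfl⟩ := Finset.mem_image.1 hy
    rw [add_smul]
    exact add_mem_add (Finset.mem_image_of_mem _ ha) (Finset.mem_image_of_mem _ ha)
  have hruzsa : ((A + D₁ + D₂).card : ℝ) * X.card
      ≤ ((A + D₁ + X).card : ℝ) * ((X + D₂).card : ℝ) := by
    exact_mod_cast Finset.ruzsa_triangle_inequality_add_add_add (A + D₁) X D₂
  have hcomm : A + D₁ + X = X + A + D₁ := by rw [add_comm, ← add_assoc]
  rw [hcomm] at hruzsa
  have hpet1 := hpet D₁
  have hS1 := hS l₁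
  have hS2 := hS l₂
  rw [← hD₁] at hS1
  rw [← hD₂] at hS2
  have c1 : (0:ℝ) ≤ ((X + D₁).card : ℝ) := by positivity
  have c2 : (0:ℝ) ≤ ((X + D₂).card : ℝ) := by positivity
  have h5 : ((X + A + D₁).card : ℝ) ≤ K * (X + D₁).card := by
    rw [← mul_le_mul_iff_left₀ hX0]
    calc ((X + A + D₁).card : ℝ) * X.card
        ≤ ((X + A).card : ℝ) * (X + D₁).card := hpet1
      _ ≤ (K * X.card) * (X + D₁).card := mul_le_mul_of_nonneg_right hXAK c1
      _ = K * (X + D₁).card * X.card := by ring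
  constructor
  · rw [le_div_iff₀ hX0]
    calc ((A + A.image (fun a => (l₁ + l₂) • a)).card : ℝ) * X.card
        ≤ ((A + D₁ + D₂).card : ℝ) * X.card := by
          have h6 : ((A + A.image (fun a => (l₁ + l₂) • a)).card : ℝ) ≤ (A + D₁ + D₂).card := by
            exact_mod_cast Finset.card_le_card hsub2
          exact mul_le_mul_of_nonneg_right h6 hX0.le
      _ ≤ ((X + A + D₁).card : ℝ) * (X + D₂).card := hruzsa
      _ ≤ (K * (X + D₁).card) * (X + D₂).card := mul_le_mul_of_nonneg_right h5 c2
      _ = K * (X + D₁).card * (X + D₂).card := by ring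
  · rw [div_le_iff₀ hX0]
    have hXlA : (X.card : ℝ) ≤ A.card := by exact_mod_cast Finset.card_le_card hXA
    calc K * ((X + D₁).card : ℝ) * ((X + D₂).card : ℝ)
        ≤ K * (K ^ l₁ * X.card) * (K ^ l₂ * X.card) := by
          refine mul_le_mul (mul_le_mul_of_nonneg_left hS1 hKpos.le) hS2 c2 (by positivity)
      _ = K ^ (l₁ + l₂ + 1) * X.card * X.card := by rw [pow_add, pow_add, pow_one]; ring
      _ ≤ K ^ (l₁ + l₂ + 1) * A.card * X.card := by
          have hp : (0:ℝ) < K ^ (l₁ + l₂ + 1) := pow_pos hKpos _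
          gcongr
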